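/- Let I and J be nonempty finite linearly ordered sets, regarded as objects of Tw(LinOrd) via the indiscrete relation, with Φ(I,≃_I) = {α ∈ Rep(I, Bℝ⁺) : α(i,j) < ∞ ⟹ i ≃_I j}. For any objects (I,≃_I), (J,≃_J) of Tw(LinOrd), the natural closed embedding Rep(I,Bℝ⁺) × Rep(J,Bℝ⁺) → Rep(I ⋆ J, Bℝ⁺) — sending (α,β) to γ with γ = α on pairs from I, γ = β on pairs from J, and γ(i,j) = ∞ for i ∈ I, j ∈ J — restricts to a homeomorphism Φ(I,≃_I) × Φ(J,≃_J) ≅ Φ(I ⋆ J, ≃_{I⋆J}). -/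

import Mathlib

set_option autoImplicit false
set_option maxHeartbeats 1000000

/-- The comparable pairs `{(x,y) : x ≤ y}` of a preordered set. -/
def PairsLE (X : Type) [Preorder X] : Type := {p : X × X // p.1 ≤ p.2}

/-- `Rep(I, Bℝ⁺)`, topologized as a subspace of the finite product
`∏_{i ≤ j} ℝ⁺`, where `ℝ⁺ = (-∞,∞]` is realized inside `EReal`: functions
on the comparable pairs, never `⊥ = -∞`, zero on the diagonal, satisfying the
cocycle condition. -/
def RepSetLE (X : Type) [Preorder X] : Set (PairsLE X → EReal) :=
  {α | (∀ p, α p ≠ ⊥) ∧ (∀ x : X, α ⟨(x, x), le_refl x⟩ = 0) ∧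
    ∀ (x y z : X) (hxy : x ≤ y) (hyz : y ≤ z),
      α ⟨(x, y), hxy⟩ + α ⟨(y, z), hyz⟩ = α ⟨(x, z), hxy.trans hyz⟩}

/-- The closed subset `Φ(I, ≃_I) ⊆ Rep(I, Bℝ⁺)` consisting of those `α` with
`α(i,j) < ∞ ⟹ i ≃_I j`. -/
def PhiSet (X : Type) [Preorder X] (E : X → X → Prop) : Set (PairsLE X → EReal) :=
  {α | α ∈ RepSetLE X ∧ ∀ (x y : X) (h : x ≤ y), α ⟨(x, y), h⟩ ≠ ⊤ → E x y}

/-- Concatenation of equivalence relations on the lexicographic sum. -/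
def starRel {I J : Type} (E : I → I → Prop) (F : J → J → Prop)
    (x y : I ⊕ₗ J) : Prop :=
  match ofLex x, ofLex y with
  | Sum.inl a, Sum.inl a' => E a a'
  | Sum.inr b, Sum.inr b' => F b b'
  | _, _ => False

/-- The natural map `Rep(I,Bℝ⁺) × Rep(J,Bℝ⁺) → Rep(I ⋆ J, Bℝ⁺)`: `γ = α` on
pairs from `I`, `γ = β` on pairs from `J`, and `γ(i,j) = ∞` for `i ∈ I`,
`j ∈ J`. -/
noncomputable def concatMap {I J : Type} [LinearOrder I] [LinearOrder J]
    (α : PairsLE I → EReal) (β : PairsLE J → EReal) :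
    PairsLE (I ⊕ₗ J) → EReal :=
  fun p =>
    match ofLex p.1.1, ofLex p.1.2 with
    | Sum.inl i, Sum.inl i' => if h : i ≤ i' then α ⟨(i, i'), h⟩ else ⊤
    | Sum.inr j, Sum.inr j' => if h : j ≤ j' then β ⟨(j, j'), h⟩ else ⊤
    | _, _ => ⊤

section Aux
variable {I J : Type} [LinearOrder I] [LinearOrder J]
  (α : PairsLE I → EReal) (β : PairsLE J → EReal)

lemma concatMap_inl (i i' : I) (h' : i ≤ i')
    (h : (toLex (Sum.inl i) : I ⊕ₗ J) ≤ toLex (Sum.inl i')) :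
    concatMap α β ⟨(toLex (Sum.inl i), toLex (Sum.inl i')), h⟩ = α ⟨(i, i'), h'⟩ := by
  unfold concatMap
  exact dif_pos h'

lemma concatMap_inr (j j' : J) (h' : j ≤ j')
    (h : (toLex (Sum.inr j) : I ⊕ₗ J) ≤ toLex (Sum.inr j')) :
    concatMap α β ⟨(toLex (Sum.inr j), toLex (Sum.inr j')), h⟩ = β ⟨(j, j'), h'⟩ := by
  unfold concatMap
  exact dif_pos h'

lemma concatMap_cross (i : I) (j : J)
    (h : (toLex (Sum.inl i) : I ⊕ₗ J) ≤ toLex (Sum.inr j)) :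
    concatMap α β ⟨(toLex (Sum.inl i), toLex (Sum.inr j)), h⟩ = ⊤ := rfl

/-- Restriction of a function on pairs of `I ⊕ₗ J` to pairs from `I`. -/
def restL (γ : PairsLE (I ⊕ₗ J) → EReal) : PairsLE I → EReal :=
  fun p => γ ⟨(toLex (Sum.inl p.1.1), toLex (Sum.inl p.1.2)), Sum.Lex.inl_le_inl_iff.mpr p.2⟩

/-- Restriction of a function on pairs of `I ⊕ₗ J` to pairs from `J`. -/
def restR (γ : PairsLE (I ⊕ₗ J) → EReal) : PairsLE J → EReal :=
  fun p => γ ⟨(toLex (Sum.inr p.1.1), toLex (Sum.inr p.1.2)), Sum.Lex.inr_le_inr_iff.mpr p.2⟩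

lemma restL_concat : restL (concatMap α β) = α := by
  funext p
  rcases p with ⟨⟨a, b⟩, h⟩
  exact concatMap_inl α β a b h _

lemma restR_concat : restR (concatMap α β) = β := by
  funext p
  rcases p with ⟨⟨a, b⟩, h⟩
  exact concatMap_inr α β a b h _

lemma continuous_concatMap :
    Continuous (fun q : (PairsLE I → EReal) × (PairsLE J → EReal) => concatMap q.1 q.2) := by
  apply continuous_pi
  rintro ⟨⟨x, y⟩, h⟩
  rcases x with i | j <;> rcases y with i' | j'
  · show Continuous fun q : (PairsLE I → EReal) × (PairsLE J → EReal) =>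
      (if h : i ≤ i' then q.1 ⟨(i, i'), h⟩ else (⊤ : EReal))
    by_cases hle : i ≤ i'
    · simp only [dif_pos hle]
      exact (continuous_apply _).comp continuous_fst
    · simp only [dif_neg hle]; exact continuous_const
  · exact continuous_const
  · exact continuous_const
  · show Continuous fun q : (PairsLE I → EReal) × (PairsLE J → EReal) =>
      (if h : j ≤ j' then q.2 ⟨(j, j'), h⟩ else (⊤ : EReal))
    by_cases hle : j ≤ j'
    · simp only [dif_pos hle]
      exact (continuous_apply _).comp continuous_snd
    · simp only [dif_neg hle]; exact continuous_const

lemma continuous_restPair :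
    Continuous (fun γ : PairsLE (I ⊕ₗ J) → EReal => (restL γ, restR γ)) := by
  refine Continuous.prodMk ?_ ?_ <;>
    exact continuous_pi fun p => continuous_apply _

lemma concatMap_mem {α : PairsLE I → EReal} {β : PairsLE J → EReal}
    (hα : α ∈ RepSetLE I) (hβ : β ∈ RepSetLE J) :
    concatMap α β ∈ RepSetLE (I ⊕ₗ J) := by
  refine ⟨?_, ?_, ?_⟩
  · rintro ⟨⟨x, y⟩, h⟩
    rcases x with i | j <;> rcases y with i' | j'
    · have h1 : concatMap α β ⟨(Sum.inl i, Sum.inl i'), h⟩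
          = α ⟨(i, i'), Sum.Lex.inl_le_inl_iff.mp h⟩ := concatMap_inl α β i i' _ h
      rw [h1]; exact hα.1 _
    · exact (by simp : (⊤ : EReal) ≠ ⊥)
    · exact (by simp : (⊤ : EReal) ≠ ⊥)
    · have h1 : concatMap α β ⟨(Sum.inr j, Sum.inr j'), h⟩
          = β ⟨(j, j'), Sum.Lex.inr_le_inr_iff.mp h⟩ := concatMap_inr α β j j' _ h
      rw [h1]; exact hβ.1 _
  · rintro (i | j)
    · have h1 : concatMap α β ⟨(Sum.inl i, Sum.inl i), le_refl _⟩
          = α ⟨(i, i), le_refl i⟩ := concatMap_inl α β i i le_rfl _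
      rw [h1]; exact hα.2.1 i
    · have h1 : concatMap α β ⟨(Sum.inr j, Sum.inr j), le_refl _⟩
          = β ⟨(j, j), le_refl j⟩ := concatMap_inr α β j j le_rfl _
      rw [h1]; exact hβ.2.1 j
  · rintro (x | x) (y | y) (z | z) hxy hyz
    · have h1 : concatMap α β ⟨(Sum.inl x, Sum.inl y), hxy⟩
          = α ⟨(x, y), Sum.Lex.inl_le_inl_iff.mp hxy⟩ := concatMap_inl α β x y _ hxy
      have h2 : concatMap α β ⟨(Sum.inl y, Sum.inl z), hyz⟩
          = α ⟨(y, z), Sum.Lex.inl_le_inl_iff.mp hyz⟩ := concatMap_inl α β y z _ hyz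
      have h3 : concatMap α β ⟨(Sum.inl x, Sum.inl z), hxy.trans hyz⟩
          = α ⟨(x, z), (Sum.Lex.inl_le_inl_iff.mp hxy).trans
              (Sum.Lex.inl_le_inl_iff.mp hyz)⟩ := concatMap_inl α β x z _ _
      rw [h1, h2, h3]; exact hα.2.2 x y z _ _
    · have h1 : concatMap α β ⟨(Sum.inl x, Sum.inl y), hxy⟩
          = α ⟨(x, y), Sum.Lex.inl_le_inl_iff.mp hxy⟩ := concatMap_inl α β x y _ hxy
      have h2 : concatMap α β ⟨(Sum.inl y, Sum.inr z), hyz⟩ = ⊤ := rfl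
      have h3 : concatMap α β ⟨(Sum.inl x, Sum.inr z), hxy.trans hyz⟩ = ⊤ := rfl
      rw [h1, h2, h3]
      exact EReal.add_top_of_ne_bot (hα.1 _)
    · exact absurd hyz Sum.Lex.not_inr_le_inl
    · have h1 : concatMap α β ⟨(Sum.inl x, Sum.inr y), hxy⟩ = ⊤ := rfl
      have h2 : concatMap α β ⟨(Sum.inr y, Sum.inr z), hyz⟩
          = β ⟨(y, z), Sum.Lex.inr_le_inr_iff.mp hyz⟩ := concatMap_inr α β y z _ hyz
      have h3 : concatMap α β ⟨(Sum.inl x, Sum.inr z), hxy.trans hyz⟩ = ⊤ := rfl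
      rw [h1, h2, h3]
      exact EReal.top_add_of_ne_bot (hβ.1 _)
    · exact absurd hxy Sum.Lex.not_inr_le_inl
    · exact absurd hxy Sum.Lex.not_inr_le_inl
    · exact absurd hyz Sum.Lex.not_inr_le_inl
    · have h1 : concatMap α β ⟨(Sum.inr x, Sum.inr y), hxy⟩
          = β ⟨(x, y), Sum.Lex.inr_le_inr_iff.mp hxy⟩ := concatMap_inr α β x y _ hxy
      have h2 : concatMap α β ⟨(Sum.inr y, Sum.inr z), hyz⟩
          = β ⟨(y, z), Sum.Lex.inr_le_inr_iff.mp hyz⟩ := concatMap_inr α β y z _ hyz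
      have h3 : concatMap α β ⟨(Sum.inr x, Sum.inr z), hxy.trans hyz⟩
          = β ⟨(x, z), (Sum.Lex.inr_le_inr_iff.mp hxy).trans
              (Sum.Lex.inr_le_inr_iff.mp hyz)⟩ := concatMap_inr α β x z _ _
      rw [h1, h2, h3]; exact hβ.2.2 x y z _ _

lemma restL_mem {γ : PairsLE (I ⊕ₗ J) → EReal} (hγ : γ ∈ RepSetLE (I ⊕ₗ J)) :
    restL γ ∈ RepSetLE I :=
  ⟨fun _ => hγ.1 _, fun x => hγ.2.1 (toLex (Sum.inl x)),
    fun _ _ _ _ _ => hγ.2.2 _ _ _ _ _⟩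

lemma restR_mem {γ : PairsLE (I ⊕ₗ J) → EReal} (hγ : γ ∈ RepSetLE (I ⊕ₗ J)) :
    restR γ ∈ RepSetLE J :=
  ⟨fun _ => hγ.1 _, fun x => hγ.2.1 (toLex (Sum.inr x)),
    fun _ _ _ _ _ => hγ.2.2 _ _ _ _ _⟩

lemma concat_rest {γ : PairsLE (I ⊕ₗ J) → EReal}
    (hcross : ∀ (i : I) (j : J),
      γ ⟨(toLex (Sum.inl i), toLex (Sum.inr j)), Sum.Lex.inl_le_inr i j⟩ = ⊤) :
    concatMap (restL γ) (restR γ) = γ := by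
  funext p
  rcases p with ⟨⟨x, y⟩, h⟩
  rcases x with i | j <;> rcases y with i' | j'
  · exact concatMap_inl _ _ i i' (Sum.Lex.inl_le_inl_iff.mp h) h
  · exact (hcross i j').symm
  · exact absurd h Sum.Lex.not_inr_le_inl
  · exact concatMap_inr _ _ j j' (Sum.Lex.inr_le_inr_iff.mp h) h

end Aux

/-- The natural map `Rep(I,Bℝ⁺) × Rep(J,Bℝ⁺) → Rep(I ⋆ J, Bℝ⁺)` is a closed
embedding, and it restricts to a homeomorphism
`Φ(I,≃_I) × Φ(J,≃_J) ≅ Φ(I ⋆ J, ≃_{I⋆J})` (an embedding whose range is exactly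
`Φ(I ⋆ J, ≃_{I⋆J})`). -/
theorem phi_concatenation_homeomorphism {I J : Type}
    [LinearOrder I] [LinearOrder J] [Fintype I] [Fintype J] [Nonempty I] [Nonempty J]
    (E : I → I → Prop) (F : J → J → Prop)
    (hE : Equivalence E) (hF : Equivalence F)
    (hEconv : ∀ i j k : I, i ≤ j → j ≤ k → E i k → E i j ∧ E j k)
    (hFconv : ∀ i j k : J, i ≤ j → j ≤ k → F i k → F i j ∧ F j k) :
    (Topology.IsEmbedding
        (fun q : ↥(RepSetLE I) × ↥(RepSetLE J) => concatMap q.1.1 q.2.1) ∧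
      (∀ q : ↥(RepSetLE I) × ↥(RepSetLE J),
        concatMap q.1.1 q.2.1 ∈ RepSetLE (I ⊕ₗ J)) ∧
      IsClosed {γ : ↥(RepSetLE (I ⊕ₗ J)) |
        (γ : PairsLE (I ⊕ₗ J) → EReal) ∈
          Set.range fun q : ↥(RepSetLE I) × ↥(RepSetLE J) => concatMap q.1.1 q.2.1}) ∧
    (Topology.IsEmbedding
        (fun q : ↥(PhiSet I E) × ↥(PhiSet J F) => concatMap q.1.1 q.2.1) ∧
      Set.range (fun q : ↥(PhiSet I E) × ↥(PhiSet J F) => concatMap q.1.1 q.2.1)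
        = PhiSet (I ⊕ₗ J) (starRel E F)) := by
  refine ⟨⟨?_, ?_, ?_⟩, ?_, ?_⟩
  · -- embedding on RepSet
    refine Topology.IsEmbedding.of_comp ?_ continuous_restPair ?_
    · exact continuous_concatMap.comp
        ((continuous_subtype_val.comp continuous_fst).prodMk
          (continuous_subtype_val.comp continuous_snd))
    · have : (fun γ : PairsLE (I ⊕ₗ J) → EReal => (restL γ, restR γ)) ∘
          (fun q : ↥(RepSetLE I) × ↥(RepSetLE J) => concatMap q.1.1 q.2.1)
          = Prod.map Subtype.val Subtype.val := by
        funext q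
        simp only [Function.comp_apply, Prod.map_apply]
        rw [restL_concat, restR_concat]
        rfl
      rw [this]
      exact Topology.IsEmbedding.subtypeVal.prodMap Topology.IsEmbedding.subtypeVal
  · -- membership
    exact fun q => concatMap_mem q.1.2 q.2.2
  · -- closed range
    have hset : {γ : ↥(RepSetLE (I ⊕ₗ J)) |
        (γ : PairsLE (I ⊕ₗ J) → EReal) ∈
          Set.range fun q : ↥(RepSetLE I) × ↥(RepSetLE J) => concatMap q.1.1 q.2.1}
        = ⋂ (i : I), ⋂ (j : J), {γ : ↥(RepSetLE (I ⊕ₗ J)) |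
            (γ : PairsLE (I ⊕ₗ J) → EReal)
              ⟨(toLex (Sum.inl i), toLex (Sum.inr j)), Sum.Lex.inl_le_inr i j⟩ = ⊤} := by
      ext γ
      simp only [Set.mem_iInter, Set.mem_setOf_eq]
      constructor
      · rintro ⟨⟨⟨α, hα⟩, ⟨β, hβ⟩⟩, hq⟩ i j
        rw [← hq]
        exact concatMap_cross α β i j _
      · intro hcross
        exact ⟨⟨⟨restL γ.1, restL_mem γ.2⟩, ⟨restR γ.1, restR_mem γ.2⟩⟩,
          concat_rest hcross⟩
    rw [hset]
    refine isClosed_iInter fun i => isClosed_iInter fun j => ?_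
    exact isClosed_eq ((continuous_apply _).comp continuous_subtype_val) continuous_const
  · -- embedding on PhiSet
    refine Topology.IsEmbedding.of_comp ?_ continuous_restPair ?_
    · exact continuous_concatMap.comp
        ((continuous_subtype_val.comp continuous_fst).prodMk
          (continuous_subtype_val.comp continuous_snd))
    · have : (fun γ : PairsLE (I ⊕ₗ J) → EReal => (restL γ, restR γ)) ∘
          (fun q : ↥(PhiSet I E) × ↥(PhiSet J F) => concatMap q.1.1 q.2.1)
          = Prod.map Subtype.val Subtype.val := by
        funext q
        simp only [Function.comp_apply, Prod.map_apply]
        rw [restL_concat, restR_concat]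
        rfl
      rw [this]
      exact Topology.IsEmbedding.subtypeVal.prodMap Topology.IsEmbedding.subtypeVal
  · -- range = PhiSet
    ext γ
    constructor
    · rintro ⟨⟨⟨α, hα⟩, ⟨β, hβ⟩⟩, rfl⟩
      refine ⟨concatMap_mem hα.1 hβ.1, ?_⟩
      rintro (x | x) (y | y) h hne
      · have h1 : concatMap α β ⟨(Sum.inl x, Sum.inl y), h⟩
            = α ⟨(x, y), Sum.Lex.inl_le_inl_iff.mp h⟩ := concatMap_inl α β x y _ h
        have hne' : concatMap α β ⟨(Sum.inl x, Sum.inl y), h⟩ ≠ ⊤ := hne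
        rw [h1] at hne'
        exact hα.2 x y _ hne'
      · exact absurd rfl hne
      · exact absurd h Sum.Lex.not_inr_le_inl
      · have h1 : concatMap α β ⟨(Sum.inr x, Sum.inr y), h⟩
            = β ⟨(x, y), Sum.Lex.inr_le_inr_iff.mp h⟩ := concatMap_inr α β x y _ h
        have hne' : concatMap α β ⟨(Sum.inr x, Sum.inr y), h⟩ ≠ ⊤ := hne
        rw [h1] at hne'
        exact hβ.2 x y _ hne'
    · intro hγ
      have hcross : ∀ (i : I) (j : J),
          γ ⟨(toLex (Sum.inl i), toLex (Sum.inr j)), Sum.Lex.inl_le_inr i j⟩ = ⊤ := by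
        intro i j
        by_contra hne
        exact hγ.2 _ _ _ hne
      refine ⟨⟨⟨restL γ, restL_mem hγ.1, ?_⟩, ⟨restR γ, restR_mem hγ.1, ?_⟩⟩,
        concat_rest hcross⟩
      · intro x y h hne
        exact hγ.2 (toLex (Sum.inl x)) (toLex (Sum.inl y)) _ hne
      · intro x y h hne
        exact hγ.2 (toLex (Sum.inr x)) (toLex (Sum.inr y)) _ hne
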